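/- Let P = P_m + ⋯ + P_1, with P_i the degree-i homogeneous component, be a polynomial solution of the minimal surface equation on ℝⁿ with m = deg P ≥ 2. Then there exists an index i with 1 ≤ i ≤ ⌈m/3⌉ such that P_i ≠ 0. -/

import Mathlib

open MvPolynomial

namespace Stmt5Aux

variable {n : ℕ}

lemma degree_add (a b : Fin n →₀ ℕ) : (a + b).degree = a.degree + b.degree := by
  simp only [Finsupp.degree_eq_weight_one, map_add]

lemma degree_single (i : Fin n) : (Finsupp.single i 1).degree = 1 := by
  rw [Finsupp.degree_apply, Finsupp.support_single_ne_zero i one_ne_zero]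
  simp

lemma coeff_pderiv (i : Fin n) (p : MvPolynomial (Fin n) ℝ) (μ : Fin n →₀ ℕ) :
    coeff μ (pderiv i p) = coeff (μ + Finsupp.single i 1) p * (μ i + 1) := by
  induction p using MvPolynomial.induction_on' with
  | add p q hp hq => simp [hp, hq, add_mul]
  | monomial ν a =>
    rw [pderiv_monomial]
    by_cases h : ν = μ + Finsupp.single i 1
    · subst h
      rw [coeff_monomial, coeff_monomial, if_pos rfl, if_pos]
      · simp [Finsupp.add_apply, Finsupp.single_apply, mul_comm, mul_assoc, mul_left_comm]
      · rw [add_tsub_cancel_right]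
    · rw [coeff_monomial, coeff_monomial, if_neg h]
      rw [zero_mul]
      by_cases hν : ν i = 0
      · split_ifs with h2
        · simp [hν]
        · rfl
      · rw [if_neg]
        intro h2
        apply h
        ext j
        have h3 := DFunLike.congr_fun h2 j
        simp only [Finsupp.tsub_apply] at h3
        simp only [Finsupp.add_apply, Finsupp.single_apply] at h3 ⊢
        by_cases hj : i = j
        · subst hj
          simp at h3 ⊢
          omega
        · simp only [if_neg hj] at h3 ⊢
          omega


/-- all monomials have degree ≥ c -/
def DegGE (c : ℕ) (p : MvPolynomial (Fin n) ℝ) : Prop :=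
  ∀ μ : Fin n →₀ ℕ, μ.degree < c → coeff μ p = 0

/-- all monomials have degree < c -/
def DegLT (c : ℕ) (p : MvPolynomial (Fin n) ℝ) : Prop :=
  ∀ μ : Fin n →₀ ℕ, c ≤ μ.degree → coeff μ p = 0

lemma DegGE.mul {c₁ c₂ : ℕ} {f g : MvPolynomial (Fin n) ℝ} (hf : DegGE c₁ f) (hg : DegGE c₂ g) :
    DegGE (c₁ + c₂) (f * g) := by
  classical
  intro μ hμ
  rw [coeff_mul]
  apply Finset.sum_eq_zero
  rintro ⟨a, b⟩ hab
  rw [Finset.HasAntidiagonal.mem_antidiagonal] at hab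
  have hd : a.degree + b.degree = μ.degree := by rw [← degree_add, hab]
  rcases lt_or_ge a.degree c₁ with h | h
  · rw [hf a h, zero_mul]
  · rw [hg b (by omega), mul_zero]

lemma DegLT.mul {c₁ c₂ c : ℕ} {f g : MvPolynomial (Fin n) ℝ} (hf : DegLT c₁ f) (hg : DegLT c₂ g)
    (hc : c₁ + c₂ ≤ c + 1) : DegLT c (f * g) := by
  classical
  intro μ hμ
  rw [coeff_mul]
  apply Finset.sum_eq_zero
  rintro ⟨a, b⟩ hab
  rw [Finset.HasAntidiagonal.mem_antidiagonal] at hab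
  have hd : a.degree + b.degree = μ.degree := by rw [← degree_add, hab]
  rcases le_or_gt c₁ a.degree with h | h
  · rw [hf a h, zero_mul]
  · rw [hg b (by omega), mul_zero]

lemma DegGE.pderiv {c : ℕ} {p : MvPolynomial (Fin n) ℝ} (hp : DegGE (c + 1) p) (i : Fin n) :
    DegGE c (pderiv i p) := by
  intro μ hμ
  rw [coeff_pderiv, hp (μ + Finsupp.single i 1) (by rw [degree_add, degree_single]; omega),
    zero_mul]

lemma DegLT.pderiv {c : ℕ} {p : MvPolynomial (Fin n) ℝ} (hp : DegLT (c + 1) p) (i : Fin n) :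
    DegLT c (pderiv i p) := by
  intro μ hμ
  rw [coeff_pderiv, hp (μ + Finsupp.single i 1) (by rw [degree_add, degree_single]; omega),
    zero_mul]

lemma DegGE.sum {c : ℕ} {ι : Type*} (s : Finset ι) (f : ι → MvPolynomial (Fin n) ℝ)
    (h : ∀ i ∈ s, DegGE c (f i)) : DegGE c (∑ i ∈ s, f i) := by
  intro μ hμ
  rw [coeff_sum]
  exact Finset.sum_eq_zero fun i hi => h i hi μ hμ

lemma DegLT.add {c : ℕ} {f g : MvPolynomial (Fin n) ℝ} (hf : DegLT c f) (hg : DegLT c g) :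
    DegLT c (f + g) := by
  intro μ hμ
  rw [coeff_add, hf μ hμ, hg μ hμ, add_zero]

lemma isHomog_degLT {c : ℕ} {p : MvPolynomial (Fin n) ℝ} (hp : p.IsHomogeneous c) :
    DegLT (c + 1) p := by
  intro μ hμ
  exact hp.coeff_eq_zero (by omega)

lemma totalDegree_degLT {c : ℕ} {p : MvPolynomial (Fin n) ℝ} (hp : p.totalDegree ≤ c) :
    DegLT (c + 1) p := by
  intro μ hμ
  apply coeff_eq_zero_of_totalDegree_lt
  rw [show (∑ i ∈ μ.support, μ i) = μ.degree from rfl]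
  omega

lemma DegLT.hc_eq_zero {c j : ℕ} {p : MvPolynomial (Fin n) ℝ} (hp : DegLT c p) (hj : c ≤ j) :
    homogeneousComponent j p = 0 := by
  ext μ
  rw [coeff_homogeneousComponent, coeff_zero]
  split_ifs with h
  · exact hp μ (by omega)
  · rfl

lemma isHomog_hc_self {c : ℕ} {p : MvPolynomial (Fin n) ℝ} (hp : p.IsHomogeneous c) :
    homogeneousComponent c p = p := by
  rw [homogeneousComponent_of_mem ((mem_homogeneousSubmodule c p).2 hp), if_pos rfl]

lemma isHomog_pderiv {c : ℕ} {p : MvPolynomial (Fin n) ℝ} (hp : p.IsHomogeneous (c + 1))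
    (i : Fin n) : (pderiv i p).IsHomogeneous c := by
  intro μ hμ
  rw [coeff_pderiv] at hμ
  have h1 : coeff (μ + Finsupp.single i 1) p ≠ 0 := fun h => hμ (by rw [h, zero_mul])
  have h2 : (μ + Finsupp.single i 1).degree = c + 1 := by
    rw [Finsupp.degree_eq_weight_one]
    exact hp h1
  rw [degree_add, degree_single] at h2
  have e : Finsupp.weight (1 : Fin n → ℕ) μ = μ.degree := by rw [Finsupp.degree_eq_weight_one]; rfl
  rw [e]
  omega


lemma degree_eq_sum_univ (μ : Fin n →₀ ℕ) : μ.degree = ∑ i : Fin n, μ i := by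
  rw [Finsupp.degree]
  exact Finset.sum_subset (Finset.subset_univ _) (by
    intro i _ hi
    rwa [Finsupp.notMem_support_iff] at hi)

/-- Euler's identity for homogeneous polynomials. -/
lemma euler {c : ℕ} {q : MvPolynomial (Fin n) ℝ} (hq : q.IsHomogeneous c) :
    ∑ i : Fin n, X i * pderiv i q = C (c : ℝ) * q := by
  classical
  ext μ
  rw [coeff_sum, coeff_C_mul]
  have key : ∀ i : Fin n, coeff μ (X i * pderiv i q) = coeff μ q * (μ i : ℝ) := by
    intro i
    rw [mul_comm (X i), coeff_mul_X']
    split_ifs with h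
    · rw [coeff_pderiv]
      have h1 : μ - Finsupp.single i 1 + Finsupp.single i 1 = μ := by
        ext j
        have := Finsupp.mem_support_iff.1 h
        simp only [Finsupp.add_apply, Finsupp.tsub_apply, Finsupp.single_apply]
        by_cases hj : i = j
        · subst hj; simp; omega
        · simp [hj]
      rw [h1, Finsupp.tsub_apply, Finsupp.single_eq_same]
      have h4 : 1 ≤ μ i := Nat.one_le_iff_ne_zero.2 (Finsupp.mem_support_iff.1 h)
      rw [Nat.cast_sub h4]
      push_cast
      ring
    · rw [Finsupp.notMem_support_iff] at h
      rw [h]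
      simp
  rw [Finset.sum_congr rfl (fun i _ => key i), ← Finset.mul_sum]
  by_cases hμ : coeff μ q = 0
  · rw [hμ]; ring
  · have := hq hμ
    have hdeg : μ.degree = c := by rw [Finsupp.degree_eq_weight_one]; exact this
    rw [← Nat.cast_sum, ← degree_eq_sum_univ, hdeg]
    ring

/-- Scaling identity for homogeneous polynomials. -/
lemma eval_scale {c : ℕ} {q : MvPolynomial (Fin n) ℝ} (hq : q.IsHomogeneous c) (t : ℝ)
    (x : Fin n → ℝ) : eval (fun i => t * x i) q = t ^ c * eval x q := by
  rw [eval_eq', eval_eq', Finset.mul_sum]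
  apply Finset.sum_congr rfl
  intro μ hμ
  have hdeg : μ.degree = c := by
    rw [Finsupp.degree_eq_weight_one]
    exact hq (mem_support_iff.1 hμ)
  simp only [mul_pow]
  rw [Finset.prod_mul_distrib, Finset.prod_pow_eq_pow_sum, ← degree_eq_sum_univ, hdeg]
  ring

/-- key homogeneous-component-of-triple-product computation -/
lemma hc_mul3 {a b c : ℕ} {q₁ q₂ q₃ r₁ r₂ r₃ : MvPolynomial (Fin n) ℝ}
    (h₁ : q₁.IsHomogeneous a) (h₂ : q₂.IsHomogeneous b) (h₃ : q₃.IsHomogeneous c)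
    (hr₁ : DegLT a r₁) (hr₂ : DegLT b r₂) (hr₃ : DegLT c r₃) :
    homogeneousComponent (a + b + c) ((q₁ + r₁) * (q₂ + r₂) * (q₃ + r₃)) = q₁ * q₂ * q₃ := by
  have expand : (q₁ + r₁) * (q₂ + r₂) * (q₃ + r₃) = q₁ * q₂ * q₃ +
      (r₁ * q₂ * q₃ + q₁ * r₂ * q₃ + q₁ * q₂ * r₃ + r₁ * r₂ * q₃ + r₁ * q₂ * r₃ +
        q₁ * r₂ * r₃ + r₁ * r₂ * r₃) := by ring
  rw [expand, map_add]
  have hq₁ := isHomog_degLT h₁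
  have hq₂ := isHomog_degLT h₂
  have hq₃ := isHomog_degLT h₃
  have hrest : DegLT (a + b + c) (r₁ * q₂ * q₃ + q₁ * r₂ * q₃ + q₁ * q₂ * r₃ + r₁ * r₂ * q₃ +
      r₁ * q₂ * r₃ + q₁ * r₂ * r₃ + r₁ * r₂ * r₃) := by
    refine DegLT.add (DegLT.add (DegLT.add (DegLT.add (DegLT.add (DegLT.add ?_ ?_) ?_) ?_) ?_) ?_) ?_
    · exact DegLT.mul (DegLT.mul (c := a + b) hr₁ hq₂ (by omega)) hq₃ (by omega)
    · exact DegLT.mul (DegLT.mul (c := a + b) hq₁ hr₂ (by omega)) hq₃ (by omega)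
    · exact DegLT.mul (DegLT.mul (c := a + b + 1) hq₁ hq₂ (by omega)) hr₃ (by omega)
    · exact DegLT.mul (DegLT.mul (c := a + b) hr₁ hr₂ (by omega)) hq₃ (by omega)
    · exact DegLT.mul (DegLT.mul (c := a + b) hr₁ hq₂ (by omega)) hr₃ (by omega)
    · exact DegLT.mul (DegLT.mul (c := a + b) hq₁ hr₂ (by omega)) hr₃ (by omega)
    · exact DegLT.mul (DegLT.mul (c := a + b) hr₁ hr₂ (by omega)) hr₃ (by omega)
  rw [hrest.hc_eq_zero le_rfl, add_zero]
  exact isHomog_hc_self ((h₁.mul h₂).mul h₃)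


/-- specialization to one variable -/
noncomputable def lineSpec (x : Fin n → ℝ) (i : Fin n) :
    MvPolynomial (Fin n) ℝ →ₐ[ℝ] Polynomial ℝ :=
  aeval (fun j => if j = i then Polynomial.X else Polynomial.C (x j))

lemma lineSpec_eval (x : Fin n → ℝ) (i : Fin n) (p : MvPolynomial (Fin n) ℝ) (t : ℝ) :
    Polynomial.eval t (lineSpec x i p) = eval (Function.update x i t) p := by
  induction p using MvPolynomial.induction_on with
  | C a => simp [lineSpec]
  | add p q hp hq => simp [map_add, hp, hq]
  | mul_X p j hp =>
    rw [map_mul, map_mul, Polynomial.eval_mul, hp]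
    congr 1
    simp only [lineSpec, aeval_X, eval_X]
    by_cases hj : j = i
    · subst hj; simp [Function.update_self]
    · simp [hj, Function.update_of_ne hj]

lemma lineSpec_pderiv (x : Fin n → ℝ) (i : Fin n) (p : MvPolynomial (Fin n) ℝ) :
    lineSpec x i (pderiv i p) = Polynomial.derivative (lineSpec x i p) := by
  induction p using MvPolynomial.induction_on with
  | C a => simp [lineSpec, pderiv_C]
  | add p q hp hq => simp only [map_add, hp, hq]
  | mul_X p j hp =>
    rw [pderiv_mul, map_add, map_mul, map_mul, map_mul, hp, Polynomial.derivative_mul]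
    congr 1
    by_cases hj : j = i
    · subst hj
      simp [lineSpec, pderiv_X_self]
    · rw [pderiv_X_of_ne hj]
      simp only [lineSpec, aeval_X, if_neg hj, map_zero, mul_zero,
        Polynomial.derivative_C, mul_zero]


lemma DegGE.sub {c : ℕ} {f g : MvPolynomial (Fin n) ℝ} (hf : DegGE c f) (hg : DegGE c g) :
    DegGE c (f - g) := by
  intro μ hμ
  rw [coeff_sub, hf μ hμ, hg μ hμ, sub_zero]

lemma DegLT.sum {c : ℕ} {ι : Type*} (s : Finset ι) (f : ι → MvPolynomial (Fin n) ℝ)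
    (h : ∀ i ∈ s, DegLT c (f i)) : DegLT c (∑ i ∈ s, f i) := by
  intro μ hμ
  rw [coeff_sum]
  exact Finset.sum_eq_zero fun i hi => h i hi μ hμ

end Stmt5Aux


open Stmt5Aux

/-- A polynomial solution `P = P_m + ⋯ + P_1` (no constant term, degree `m ≥ 2`) of the
minimal surface equation must contain a nonzero homogeneous component of some degree `i`
with `1 ≤ i ≤ ⌈m/3⌉`.  (Note: `⌈m/3⌉ = (m + 2) / 3` in natural-number division.) -/
theorem stmt5 {n : ℕ} (m : ℕ) (hm : 2 ≤ m) (P : MvPolynomial (Fin n) ℝ)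
    (hdeg : P.totalDegree = m) (hconst : constantCoeff P = 0)
    (hMSE : (1 + ∑ i : Fin n, (pderiv i P) ^ 2) * (∑ i : Fin n, pderiv i (pderiv i P))
      - ∑ i : Fin n, ∑ j : Fin n,
          pderiv i P * pderiv j P * pderiv j (pderiv i P) = 0) :
    ∃ i : ℕ, 1 ≤ i ∧ i ≤ (m + 2) / 3 ∧ homogeneousComponent i P ≠ 0 := by
  by_contra hcon
  push_neg at hcon
  obtain ⟨m', rfl⟩ : ∃ m', m = m' + 2 := ⟨m - 2, by omega⟩
  obtain ⟨K', hK'⟩ : ∃ K', (m' + 2 + 2) / 3 = K' + 1 := ⟨(m' + 4) / 3 - 1, by omega⟩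
  -- Step A : all monomials of P have degree ≥ K' + 2
  have hPge : DegGE (K' + 2) P := by
    intro μ hμ
    by_cases hd : μ.degree = 0
    · have h0 : μ = 0 := (Finsupp.degree_eq_zero_iff μ).1 hd
      rw [h0, ← constantCoeff_eq] at *
      exact hconst
    · have h1 : coeff μ P = coeff μ (homogeneousComponent μ.degree P) := by
        rw [coeff_homogeneousComponent, if_pos rfl]
      rw [h1, hcon μ.degree (by omega) (by omega), coeff_zero]
  have hPi : ∀ i, DegGE (K' + 1) (pderiv i P) := fun i => hPge.pderiv i
  have hPij : ∀ i j, DegGE K' (pderiv j (pderiv i P)) := fun i j => (hPi i).pderiv j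
  have hPlt : DegLT (m' + 3) P := totalDegree_degLT (le_of_eq hdeg)
  have hPilt : ∀ i, DegLT (m' + 2) (pderiv i P) := fun i => hPlt.pderiv i
  have hPijlt : ∀ i j, DegLT (m' + 1) (pderiv j (pderiv i P)) := fun i j => (hPilt i).pderiv j
  -- Step B : the Laplacian of P vanishes
  have hDge : DegGE K' (∑ i : Fin n, pderiv i (pderiv i P)) :=
    DegGE.sum _ _ fun i _ => hPij i i
  have hSge : DegGE (K' + 1 + (K' + 1)) (∑ i : Fin n, (pderiv i P) ^ 2) := by
    apply DegGE.sum
    intro i _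
    rw [sq]
    exact (hPi i).mul (hPi i)
  have hBge : DegGE (K' + 1 + (K' + 1) + K')
      (∑ i : Fin n, ∑ j : Fin n, pderiv i P * pderiv j P * pderiv j (pderiv i P)) :=
    DegGE.sum _ _ fun i _ => DegGE.sum _ _ fun j _ => ((hPi i).mul (hPi j)).mul (hPij i j)
  have hΔ0 : (∑ i : Fin n, pderiv i (pderiv i P)) = 0 := by
    have heq : (∑ i : Fin n, pderiv i (pderiv i P)) =
        (∑ i : Fin n, ∑ j : Fin n, pderiv i P * pderiv j P * pderiv j (pderiv i P)) -
        (∑ i : Fin n, (pderiv i P) ^ 2) * (∑ i : Fin n, pderiv i (pderiv i P)) := by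
      linear_combination hMSE
    have hge : DegGE (K' + 1 + (K' + 1) + K') (∑ i : Fin n, pderiv i (pderiv i P)) := by
      rw [heq]
      exact hBge.sub (hSge.mul hDge)
    have hlt : DegLT (m' + 1) (∑ i : Fin n, pderiv i (pderiv i P)) :=
      DegLT.sum _ _ fun i _ => hPijlt i i
    ext μ
    rw [coeff_zero]
    rcases lt_or_ge μ.degree (K' + 1 + (K' + 1) + K') with h | h
    · exact hge μ h
    · exact hlt μ (by omega)
  have hB0 : (∑ i : Fin n, ∑ j : Fin n,
      pderiv i P * pderiv j P * pderiv j (pderiv i P)) = 0 := by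
    linear_combination (1 + ∑ i : Fin n, (pderiv i P) ^ 2) * hΔ0 - hMSE
  -- Step C : top homogeneous component
  have hQhom : (homogeneousComponent (m' + 2) P).IsHomogeneous (m' + 2) :=
    homogeneousComponent_isHomogeneous _ _
  set Q := homogeneousComponent (m' + 2) P with hQdef
  set R := P - Q with hRdef
  have hPQR : P = Q + R := by rw [hRdef]; ring
  have hRlt : DegLT (m' + 2) R := by
    intro μ hμ
    rw [hRdef, coeff_sub, hQdef, coeff_homogeneousComponent]
    rcases eq_or_lt_of_le hμ with h | h
    · rw [if_pos h.symm]; ring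
    · rw [if_neg (by omega), coeff_eq_zero_of_totalDegree_lt (by rw [hdeg]; exact h), sub_zero]
  have hQi : ∀ i, (pderiv i Q).IsHomogeneous (m' + 1) := fun i => isHomog_pderiv hQhom i
  have hQij : ∀ i j, (pderiv j (pderiv i Q)).IsHomogeneous m' := fun i j =>
    isHomog_pderiv (hQi i) j
  have hRi : ∀ i, DegLT (m' + 1) (pderiv i R) := fun i => hRlt.pderiv i
  have hRij : ∀ i j, DegLT m' (pderiv j (pderiv i R)) := fun i j => (hRi i).pderiv j
  -- Step D : the key identity for Q
  have hkey : ∑ i : Fin n, ∑ j : Fin n,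
      pderiv i Q * pderiv j Q * pderiv j (pderiv i Q) = 0 := by
    have hsum : homogeneousComponent (m' + 1 + (m' + 1) + m')
        (∑ i : Fin n, ∑ j : Fin n, pderiv i P * pderiv j P * pderiv j (pderiv i P)) =
        ∑ i : Fin n, ∑ j : Fin n, pderiv i Q * pderiv j Q * pderiv j (pderiv i Q) := by
      rw [map_sum]
      refine Finset.sum_congr rfl fun i _ => ?_
      rw [map_sum]
      refine Finset.sum_congr rfl fun j _ => ?_
      have e1 : pderiv i P = pderiv i Q + pderiv i R := by rw [hPQR, map_add]
      have e2 : pderiv j P = pderiv j Q + pderiv j R := by rw [hPQR, map_add]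
      have e3 : pderiv j (pderiv i P) = pderiv j (pderiv i Q) + pderiv j (pderiv i R) := by
        rw [hPQR, map_add, map_add]
      rw [e3, e1, e2]
      exact hc_mul3 (hQi i) (hQi j) (hQij i j) (hRi i) (hRi j) (hRij i j)
    rw [hB0, map_zero] at hsum
    exact hsum.symm
  -- Step E : Q is nonzero and nonvanishing somewhere
  have hPne : P ≠ 0 := by
    intro h
    rw [h, totalDegree_zero] at hdeg
    omega
  have hQne : Q ≠ 0 := by
    obtain ⟨μ₀, hμ₀, hsup⟩ :=
      Finset.exists_mem_eq_sup P.support (support_nonempty.2 hPne)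
        (fun μ : Fin n →₀ ℕ => μ.sum fun _ e => e)
    have hdeg₀ : μ₀.degree = m' + 2 := by
      rw [show μ₀.degree = μ₀.sum fun _ e => e from rfl, ← hsup, ← totalDegree, hdeg]
    intro h
    have : coeff μ₀ Q = coeff μ₀ P := by
      rw [hQdef, coeff_homogeneousComponent, if_pos hdeg₀]
    rw [h, coeff_zero] at this
    exact (mem_support_iff.1 hμ₀) this.symm
  have heval0 : eval (0 : Fin n → ℝ) Q = 0 := by
    have : constantCoeff Q = 0 := by
      rw [constantCoeff_eq]
      show coeff 0 Q = 0
      rw [hQdef, coeff_homogeneousComponent, if_neg (by simp [map_zero])]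
    rw [eval_zero]
    exact this
  obtain ⟨z, hz⟩ : ∃ z, eval z Q ≠ 0 := by
    by_contra h
    push_neg at h
    exact hQne (MvPolynomial.funext fun x => by rw [h x, map_zero])
  have hz0 : z ≠ 0 := fun h => hz (by rw [h, heval0])
  obtain ⟨i₀, hi₀⟩ := Function.ne_iff.1 hz0
  have hspos : 0 < ∑ i : Fin n, z i ^ 2 := by
    apply Finset.sum_pos' (fun i _ => sq_nonneg _)
    refine ⟨i₀, Finset.mem_univ _, ?_⟩
    have hzi : z i₀ ≠ 0 := by simpa using hi₀
    positivity
  -- normalize z to the unit sphere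
  set Sph : Set (Fin n → ℝ) := {x | ∑ i : Fin n, x i ^ 2 = 1} with hSphdef
  have hnorm : ∀ x : Fin n → ℝ, 0 < ∑ i : Fin n, x i ^ 2 →
      (fun i => (Real.sqrt (∑ i : Fin n, x i ^ 2))⁻¹ * x i) ∈ Sph := by
    intro x hx
    have hr : (0:ℝ) < Real.sqrt (∑ i : Fin n, x i ^ 2) := Real.sqrt_pos.2 hx
    have hr2 : Real.sqrt (∑ i : Fin n, x i ^ 2) ^ 2 = ∑ i : Fin n, x i ^ 2 :=
      Real.sq_sqrt hx.le
    simp only [hSphdef, Set.mem_setOf_eq, mul_pow, ← Finset.mul_sum]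
    rw [inv_pow, hr2]
    exact inv_mul_cancel₀ hx.ne'
  set w : Fin n → ℝ := fun i => (Real.sqrt (∑ i : Fin n, z i ^ 2))⁻¹ * z i with hwdef
  have hwS : w ∈ Sph := hnorm z hspos
  have hQw : eval w Q ≠ 0 := by
    rw [hwdef, eval_scale hQhom]
    exact mul_ne_zero (pow_ne_zero _ (inv_ne_zero (Real.sqrt_pos.2 hspos).ne')) hz
  -- compactness of the sphere and a maximum point of Q²
  have hSphC : IsCompact Sph := by
    have hcl : IsClosed Sph :=
      isClosed_eq (continuous_finset_sum _ fun i _ => (continuous_apply i).pow 2)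
        continuous_const
    have hsub : Sph ⊆ Metric.closedBall 0 1 := by
      intro x hx
      rw [Metric.mem_closedBall, dist_pi_le_iff zero_le_one]
      intro i
      have hle : x i ^ 2 ≤ 1 := by
        rw [← hx]
        exact Finset.single_le_sum (f := fun j => x j ^ 2) (fun j _ => sq_nonneg _)
          (Finset.mem_univ i)
      have : dist (x i) ((0 : Fin n → ℝ) i) = |x i| := by
        simp [Real.dist_eq]
      rw [this]
      nlinarith [abs_nonneg (x i), sq_abs (x i)]
    exact (isCompact_closedBall 0 1).of_isClosed_subset hcl hsub
  obtain ⟨x₀, hx₀S, hmax⟩ := hSphC.exists_isMaxOn ⟨w, hwS⟩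
    ((MvPolynomial.continuous_eval Q).pow 2).continuousOn
  have hx₀sum : ∑ i : Fin n, x₀ i ^ 2 = 1 := hx₀S
  set M : ℝ := (eval x₀ Q) ^ 2 with hMdef
  -- the comparison polynomial G
  set T : MvPolynomial (Fin n) ℝ := ∑ i : Fin n, X i ^ 2 with hTdef
  have hThom : T.IsHomogeneous 2 := by
    apply IsHomogeneous.sum
    intro i _
    simpa using (isHomogeneous_X ℝ i).pow 2
  have hTeval : ∀ x : Fin n → ℝ, eval x T = ∑ i : Fin n, x i ^ 2 := by
    intro x
    simp [hTdef]
  set G : MvPolynomial (Fin n) ℝ := Q ^ 2 - C M * T ^ (m' + 2) with hGdef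
  have hGeval : ∀ x : Fin n → ℝ, eval x G =
      (eval x Q) ^ 2 - M * (∑ i : Fin n, x i ^ 2) ^ (m' + 2) := by
    intro x
    simp [hGdef, hTeval x]
  have hGle : ∀ x : Fin n → ℝ, eval x G ≤ 0 := by
    intro x
    rw [hGeval]
    rcases (Finset.sum_nonneg (fun i _ => sq_nonneg (x i))).eq_or_lt with h0 | hpos
    · have hx0 : x = 0 := by
        funext i
        have := (Finset.sum_eq_zero_iff_of_nonneg
          (fun j (_ : j ∈ Finset.univ) => sq_nonneg (x j))).1 h0.symm i (Finset.mem_univ i)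
        exact (pow_eq_zero_iff two_ne_zero).1 this
      have hzero : ∑ i : Fin n, (0 : Fin n → ℝ) i ^ 2 = 0 := by simp
      rw [hx0, heval0, hzero, zero_pow (by omega : m' + 2 ≠ 0), mul_zero]
      norm_num
    · set r : ℝ := Real.sqrt (∑ i : Fin n, x i ^ 2) with hrdef
      have hr : 0 < r := Real.sqrt_pos.2 hpos
      have hr2 : r ^ 2 = ∑ i : Fin n, x i ^ 2 := Real.sq_sqrt hpos.le
      set y : Fin n → ℝ := fun i => r⁻¹ * x i with hydef
      have hyS : y ∈ Sph := hnorm x hpos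
      have hxy : ∀ i, x i = r * y i := by
        intro i
        rw [hydef]
        field_simp
      have hevalxy : eval x Q = r ^ (m' + 2) * eval y Q := by
        rw [show x = fun i => r * y i from funext hxy]
        exact eval_scale hQhom r y
      have hyle : (eval y Q) ^ 2 ≤ M := hmax hyS
      have hfac : (eval x Q) ^ 2 - M * (∑ i : Fin n, x i ^ 2) ^ (m' + 2) =
          ((r ^ (m' + 2)) ^ 2) * ((eval y Q) ^ 2 - M) := by
        rw [hevalxy, ← hr2, ← pow_mul, ← pow_mul, Nat.mul_comm 2 (m' + 2)]
        ring
      rw [hfac]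
      exact mul_nonpos_of_nonneg_of_nonpos (sq_nonneg _) (sub_nonpos.2 hyle)
  have hGx₀ : eval x₀ G = 0 := by
    rw [hGeval, hx₀sum, one_pow, mul_one, hMdef, sub_self]
  -- the gradient of G vanishes at x₀
  have hgrad : ∀ i : Fin n, eval x₀ (pderiv i G) = 0 := by
    intro i
    have hlm : IsLocalMax (fun t => Polynomial.eval t (lineSpec x₀ i G)) (x₀ i) := by
      apply Filter.Eventually.of_forall
      intro t
      show Polynomial.eval t (lineSpec x₀ i G) ≤ Polynomial.eval (x₀ i) (lineSpec x₀ i G)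
      rw [lineSpec_eval, lineSpec_eval, Function.update_eq_self, hGx₀]
      exact hGle _
    have hd := hlm.deriv_eq_zero
    rw [(Polynomial.hasDerivAt (lineSpec x₀ i G) (x₀ i)).deriv] at hd
    rw [← lineSpec_pderiv, lineSpec_eval, Function.update_eq_self] at hd
    exact hd
  -- compute the gradient of G
  have hTpd : ∀ i : Fin n, pderiv i T = 2 * X i := by
    intro i
    rw [hTdef, map_sum]
    rw [Finset.sum_eq_single i (fun j _ hji => by rw [pderiv_pow, pderiv_X_of_ne hji]; ring)
      (fun h => absurd (Finset.mem_univ i) h)]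
    rw [pderiv_pow, pderiv_X_self]
    push_cast
    ring
  have hpdG : ∀ i : Fin n, pderiv i G =
      2 * Q * pderiv i Q - C M * (((m' + 2 : ℕ) : MvPolynomial (Fin n) ℝ) *
        T ^ (m' + 1) * (2 * X i)) := by
    intro i
    rw [hGdef, map_sub, pderiv_pow, pderiv_C_mul, pderiv_pow, hTpd,
      show m' + 2 - 1 = m' + 1 from rfl, show (2 : ℕ) - 1 = 1 from rfl]
    push_cast
    ring
  set c₀ : ℝ := eval x₀ Q with hc₀def
  have hgradQ : ∀ i : Fin n, c₀ * eval x₀ (pderiv i Q) = (m' + 2 : ℝ) * M * x₀ i := by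
    intro i
    have := hgrad i
    rw [hpdG i] at this
    simp only [map_sub, map_mul, map_ofNat, map_natCast, map_pow, eval_C, eval_X] at this
    rw [hTeval, hx₀sum, one_pow] at this
    rw [← hc₀def] at this
    push_cast at this ⊢
    nlinarith [this]
  -- Q(x₀) cannot vanish
  have hc₀ : c₀ ≠ 0 := by
    intro h
    have hM0 : M = 0 := by rw [hMdef, h]; ring
    have hww : (eval w Q) ^ 2 ≤ M := hmax hwS
    rw [hM0] at hww
    exact hQw ((pow_eq_zero_iff two_ne_zero).1 (le_antisymm hww (sq_nonneg _)))
  -- hence the gradient of Q at x₀ is radial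
  have hM : M = c₀ ^ 2 := hMdef
  have hQgrad : ∀ i : Fin n, eval x₀ (pderiv i Q) = ((m' : ℝ) + 2) * c₀ * x₀ i := by
    intro i
    have h1 := hgradQ i
    rw [hM] at h1
    apply mul_left_cancel₀ hc₀
    rw [h1]
    ring
  -- Euler identity evaluated at x₀
  have heul : ∀ i : Fin n, ∑ j : Fin n, x₀ j * eval x₀ (pderiv j (pderiv i Q)) =
      ((m' : ℝ) + 1) * eval x₀ (pderiv i Q) := by
    intro i
    have := congrArg (eval x₀) (euler (hQi i))
    simp only [map_sum, map_mul, eval_X, eval_C] at this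
    rw [this]
    push_cast
    ring
  -- evaluate the key identity at x₀ to obtain a contradiction
  have h0 := congrArg (eval x₀) hkey
  simp only [map_sum, map_mul, map_zero] at h0
  have hinner : ∀ i : Fin n,
      ∑ j : Fin n, eval x₀ (pderiv i Q) * eval x₀ (pderiv j Q) *
        eval x₀ (pderiv j (pderiv i Q)) =
      (((m' : ℝ) + 2) * c₀) ^ 3 * ((m' : ℝ) + 1) * x₀ i ^ 2 := by
    intro i
    have e : ∀ j : Fin n, eval x₀ (pderiv i Q) * eval x₀ (pderiv j Q) *
        eval x₀ (pderiv j (pderiv i Q)) =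
        (((m' : ℝ) + 2) ^ 2 * c₀ ^ 2 * x₀ i) * (x₀ j * eval x₀ (pderiv j (pderiv i Q))) := by
      intro j
      rw [hQgrad i, hQgrad j]
      ring
    rw [Finset.sum_congr rfl fun j _ => e j, ← Finset.mul_sum, heul i, hQgrad i]
    ring
  rw [Finset.sum_congr rfl fun i _ => hinner i, ← Finset.mul_sum, hx₀sum, mul_one] at h0
  have hne : (((m' : ℝ) + 2) * c₀) ^ 3 * ((m' : ℝ) + 1) ≠ 0 := by
    apply mul_ne_zero
    · exact pow_ne_zero _ (mul_ne_zero (by positivity) hc₀)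
    · positivity
  exact hne h0
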